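/- Let n ≥ 1 and let Ã₁, Ã₂ be symmetric positive semidefinite real n×n matrices, let Ã = Ã₁ + Ã₂, let τ > 0 and σ ≥ 1/2. If vectors v, v', φ̃ ∈ ℝⁿ satisfy (I + στÃ₁)(I + στÃ₂)((v' − v)/τ) + Ã v = φ̃, then ‖(I + στÃ₂) v'‖ ≤ ‖(I + στÃ₂) v‖ + τ ‖φ̃‖, where ‖·‖ is the Euclidean norm on ℝⁿ. -/

import Mathlib

open Matrix

/-- The Euclidean norm of a vector in `ℝⁿ`. -/
noncomputable def euclNorm {n : ℕ} (x : Fin n → ℝ) : ℝ :=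
  Real.sqrt (x ⬝ᵥ x)

lemma euclNorm_nonneg {n : ℕ} (x : Fin n → ℝ) : 0 ≤ euclNorm x :=
  Real.sqrt_nonneg _

lemma euclNorm_eq {n : ℕ} (x : Fin n → ℝ) :
    euclNorm x = ‖(WithLp.equiv 2 (Fin n → ℝ)).symm x‖ := by
  rw [euclNorm, EuclideanSpace.norm_eq]
  congr 1
  simp [dotProduct, Real.norm_eq_abs, sq_abs, sq]

lemma euclNorm_add_le {n : ℕ} (x y : Fin n → ℝ) :
    euclNorm (x + y) ≤ euclNorm x + euclNorm y := by
  simp only [euclNorm_eq]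
  exact norm_add_le ((WithLp.equiv 2 (Fin n → ℝ)).symm x) ((WithLp.equiv 2 (Fin n → ℝ)).symm y)

lemma euclNorm_smul {n : ℕ} (c : ℝ) (x : Fin n → ℝ) :
    euclNorm (c • x) = |c| * euclNorm x := by
  simp only [euclNorm_eq]
  rw [show (WithLp.equiv 2 (Fin n → ℝ)).symm (c • x)
      = c • (WithLp.equiv 2 (Fin n → ℝ)).symm x from rfl, norm_smul, Real.norm_eq_abs]

lemma psd_smul {n : ℕ} {M : Matrix (Fin n) (Fin n) ℝ} (hM : M.PosSemidef) {c : ℝ} (hc : 0 ≤ c) :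
    (c • M).PosSemidef := by
  refine Matrix.PosSemidef.of_dotProduct_mulVec_nonneg ?_ (fun x => ?_)
  · rw [Matrix.IsHermitian, conjTranspose_smul, hM.1.eq, star_trivial]
  · rw [smul_mulVec, dotProduct_smul, smul_eq_mul]
    exact mul_nonneg hc (hM.dotProduct_mulVec_nonneg x)

lemma euclNorm_mulVec_le {n : ℕ} {M : Matrix (Fin n) (Fin n) ℝ}
    (hsym : Mᵀ = M) (h : (1 - M * M).PosSemidef) (x : Fin n → ℝ) :
    euclNorm (M *ᵥ x) ≤ euclNorm x := by
  have h0 := h.dotProduct_mulVec_nonneg x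
  rw [star_trivial, sub_mulVec, one_mulVec, dotProduct_sub, ← Matrix.mulVec_mulVec,
    Matrix.dotProduct_mulVec, ← Matrix.mulVec_transpose, hsym] at h0
  exact Real.sqrt_le_sqrt (by linarith)

section contract

lemma basic_facts {n : ℕ} {A : Matrix (Fin n) (Fin n) ℝ} (hA : A.PosSemidef) {c : ℝ}
    (hc : 0 ≤ c) :
    (1 + c • A).PosDef ∧ (1 + c • A) * (1 + c • A)⁻¹ = 1 ∧ (1 + c • A)⁻¹ * (1 + c • A) = 1
      ∧ ((1 + c • A)⁻¹)ᵀ = (1 + c • A)⁻¹ := by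
  have hpd : (1 + c • A).PosDef := Matrix.PosDef.add_posSemidef Matrix.PosDef.one (psd_smul hA hc)
  have hdet : IsUnit (1 + c • A).det := isUnit_iff_ne_zero.mpr hpd.det_pos.ne'
  refine ⟨hpd, Matrix.mul_nonsing_inv _ hdet, Matrix.nonsing_inv_mul _ hdet, ?_⟩
  rw [← conjTranspose_eq_transpose_of_trivial]
  exact hpd.inv.isHermitian

lemma inv_contract {n : ℕ} {A : Matrix (Fin n) (Fin n) ℝ} (hA : A.PosSemidef) {c : ℝ}
    (hc : 0 ≤ c) (x : Fin n → ℝ) :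
    euclNorm ((1 + c • A)⁻¹ *ᵥ x) ≤ euclNorm x := by
  obtain ⟨hpd, hBX, hXB, hsym⟩ := basic_facts hA hc
  set B := 1 + c • A with hBdef
  set X := B⁻¹ with hXdef
  apply euclNorm_mulVec_le hsym
  have key : 1 - X * X = Xᴴ * ((2 * c) • A + (c * c) • (A * A)) * X := by
    rw [conjTranspose_eq_transpose_of_trivial, hsym]
    have hexp : (2 * c) • A + (c * c) • (A * A) = B * B - 1 := by
      rw [hBdef]
      simp only [Matrix.add_mul, Matrix.mul_add, Matrix.one_mul, Matrix.mul_one,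
        Matrix.smul_mul, Matrix.mul_smul, smul_smul]
      abel_nf
      module
    rw [hexp, Matrix.mul_sub, Matrix.sub_mul, Matrix.mul_one]
    rw [show X * (B * B) * X = 1 by rw [← Matrix.mul_assoc, hXB, Matrix.one_mul, hBX]]
  have hpsd : (1 - X * X).PosSemidef := by
    rw [key]
    exact Matrix.PosSemidef.conjTranspose_mul_mul_same
      ((psd_smul hA (by linarith)).add (psd_smul (by simpa [sq] using hA.pow 2) (mul_nonneg hc hc))) X
  exact hpsd

lemma refl_contract {n : ℕ} {A : Matrix (Fin n) (Fin n) ℝ} (hA : A.PosSemidef) {c : ℝ}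
    (hc : 0 ≤ c) (x : Fin n → ℝ) :
    euclNorm (((2:ℝ) • (1 + c • A)⁻¹ - 1) *ᵥ x) ≤ euclNorm x := by
  obtain ⟨hpd, hBX, hXB, hsym⟩ := basic_facts hA hc
  set B := 1 + c • A with hBdef
  set X := B⁻¹ with hXdef
  apply euclNorm_mulVec_le
  · rw [Matrix.transpose_sub, Matrix.transpose_smul, hsym, Matrix.transpose_one]
  have key : 1 - ((2:ℝ) • X - 1) * ((2:ℝ) • X - 1) = Xᴴ * ((4 * c) • A) * X := by
    rw [conjTranspose_eq_transpose_of_trivial, hsym]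
    have h1X : (1 : Matrix (Fin n) (Fin n) ℝ) - X = c • (A * X) := by
      have : (B - 1) * X = 1 - X := by
        rw [Matrix.sub_mul, hBX, Matrix.one_mul]
      rw [← this, hBdef, add_sub_cancel_left, Matrix.smul_mul]
    have hXX : X - X * X = c • (X * (A * X)) := by
      have h2 := congrArg (fun M => X * M) h1X
      simpa [Matrix.mul_sub, Matrix.mul_one, Matrix.mul_smul] using h2
    have hr : X * ((4 * c) • A) * X = (4 : ℝ) • (c • (X * (A * X))) := by
      rw [Matrix.mul_smul, Matrix.smul_mul, Matrix.mul_assoc, smul_smul]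
    rw [hr, ← hXX]
    simp only [Matrix.mul_sub, Matrix.sub_mul, Matrix.mul_one, Matrix.one_mul, smul_sub,
      Matrix.smul_mul, Matrix.mul_smul, smul_smul]
    module
  have hpsd : (1 - ((2:ℝ) • X - 1) * ((2:ℝ) • X - 1)).PosSemidef := by
    rw [key]
    exact Matrix.PosSemidef.conjTranspose_mul_mul_same (psd_smul hA (by linarith)) X
  exact hpsd

end contract

theorem symmetrized_factorized_scheme_one_step_stability
    {n : ℕ} (hn : 1 ≤ n)
    (A₁ A₂ : Matrix (Fin n) (Fin n) ℝ)
    (hA₁ : A₁.PosSemidef) (hA₂ : A₂.PosSemidef)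
    (A : Matrix (Fin n) (Fin n) ℝ) (hA : A = A₁ + A₂)
    (τ σ : ℝ) (hτ : 0 < τ) (hσ : 1 / 2 ≤ σ)
    (v v' φ : Fin n → ℝ)
    (hscheme : ((1 + (σ * τ) • A₁) * (1 + (σ * τ) • A₂)) *ᵥ ((1 / τ) • (v' - v))
        + A *ᵥ v = φ) :
    euclNorm ((1 + (σ * τ) • A₂) *ᵥ v')
      ≤ euclNorm ((1 + (σ * τ) • A₂) *ᵥ v) + τ * euclNorm φ := by
  have hσpos : (0 : ℝ) < σ := lt_of_lt_of_le (by norm_num) hσ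
  set c : ℝ := σ * τ with hcdef
  have hc : 0 < c := mul_pos hσpos hτ
  set B₁ := 1 + c • A₁ with hB₁def
  set B₂ := 1 + c • A₂ with hB₂def
  obtain ⟨hpd₁, hBX₁, hXB₁, hsym₁⟩ := basic_facts hA₁ hc.le
  obtain ⟨hpd₂, hBX₂, hXB₂, hsym₂⟩ := basic_facts hA₂ hc.le
  set X₁ := B₁⁻¹ with hX₁def
  set X₂ := B₂⁻¹ with hX₂def
  set S₁ := (2:ℝ) • X₁ - 1 with hS₁def
  set S₂ := (2:ℝ) • X₂ - 1 with hS₂def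
  set u := B₂ *ᵥ v with hudef
  set w := B₂ *ᵥ v' with hwdef
  -- step 1: clean form of the scheme
  have h1 : (B₁ * B₂) *ᵥ v' = (B₁ * B₂) *ᵥ v + τ • φ - τ • (A *ᵥ v) := by
    have h0 : (1 / τ) • ((B₁ * B₂) *ᵥ (v' - v)) = φ - A *ᵥ v := by
      rw [← Matrix.mulVec_smul]
      exact eq_sub_of_add_eq hscheme
    have h0' : (B₁ * B₂) *ᵥ (v' - v) = τ • (φ - A *ᵥ v) := by
      have := congrArg (fun y => τ • y) h0
      simpa [smul_smul, one_div, mul_inv_cancel₀ hτ.ne'] using this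
    rw [Matrix.mulVec_sub] at h0'
    rw [smul_sub] at h0'
    have := eq_add_of_sub_eq h0'
    rw [this]
    abel
  -- step 2: key identity
  have hkey : σ • w = (σ - 1/2) • u + ((1:ℝ)/2) • (S₁ *ᵥ (S₂ *ᵥ u)) + c • (X₁ *ᵥ φ) := by
    -- injectivity of B₁ *ᵥ
    have hinj : ∀ x y : Fin n → ℝ, B₁ *ᵥ x = B₁ *ᵥ y → x = y := by
      intro x y hxy
      have := congrArg (fun z => X₁ *ᵥ z) hxy
      simpa [Matrix.mulVec_mulVec, (hXB₁ : X₁ * B₁ = 1), Matrix.one_mulVec] using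
        (by rwa [Matrix.mulVec_mulVec, Matrix.mulVec_mulVec, (hXB₁ : X₁ * B₁ = 1)] at this :
          (1 : Matrix (Fin n) (Fin n) ℝ) *ᵥ x = 1 *ᵥ y)
    apply hinj
    have hL : B₁ *ᵥ (σ • w) = σ • ((B₁ * B₂) *ᵥ v + τ • φ - τ • (A *ᵥ v)) := by
      rw [Matrix.mulVec_smul, hwdef, Matrix.mulVec_mulVec, h1]
    have hS₂u : S₂ *ᵥ u = (2:ℝ) • v - u := by
      rw [hS₂def, Matrix.sub_mulVec, Matrix.one_mulVec, Matrix.smul_mulVec, hudef,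
        Matrix.mulVec_mulVec, (hXB₂ : X₂ * B₂ = 1), Matrix.one_mulVec]
    have hS₁ : ∀ y : Fin n → ℝ, B₁ *ᵥ (S₁ *ᵥ y) = (2:ℝ) • y - B₁ *ᵥ y := by
      intro y
      rw [hS₁def, Matrix.sub_mulVec, Matrix.one_mulVec, Matrix.smul_mulVec,
        Matrix.mulVec_sub, Matrix.mulVec_smul, Matrix.mulVec_mulVec, (hBX₁ : B₁ * X₁ = 1), Matrix.one_mulVec]
    have hX₁φ : B₁ *ᵥ (X₁ *ᵥ φ) = φ := by
      rw [Matrix.mulVec_mulVec, (hBX₁ : B₁ * X₁ = 1), Matrix.one_mulVec]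
    rw [hL, Matrix.mulVec_add, Matrix.mulVec_add, Matrix.mulVec_smul, Matrix.mulVec_smul,
      Matrix.mulVec_smul, hX₁φ, hS₂u, hS₁, hudef, Matrix.mulVec_mulVec]
    rw [Matrix.mulVec_sub, Matrix.mulVec_smul]
    simp only [hB₁def, hB₂def, hA, hcdef, Matrix.add_mul, Matrix.mul_add, Matrix.one_mul,
      Matrix.mul_one, Matrix.smul_mul, Matrix.mul_smul, smul_smul, Matrix.add_mulVec,
      Matrix.one_mulVec, Matrix.smul_mulVec, Matrix.mulVec_add, Matrix.mulVec_smul,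
      Matrix.mulVec_mulVec]
    match_scalars <;> (push_cast; ring)
  -- step 3: norms
  have hcontr1 : euclNorm (S₁ *ᵥ (S₂ *ᵥ u)) ≤ euclNorm u :=
    le_trans (refl_contract hA₁ hc.le _) (refl_contract hA₂ hc.le u)
  have hcontr3 : euclNorm (X₁ *ᵥ φ) ≤ euclNorm φ := inv_contract hA₁ hc.le φ
  have htri : euclNorm (σ • w) ≤ euclNorm ((σ - 1/2) • u)
      + euclNorm (((1:ℝ)/2) • (S₁ *ᵥ (S₂ *ᵥ u))) + euclNorm (c • (X₁ *ᵥ φ)) := by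
    rw [hkey]
    exact le_trans (euclNorm_add_le _ _) (add_le_add_left (euclNorm_add_le _ _) _)
  simp only [euclNorm_smul] at htri
  rw [abs_of_pos hσpos, abs_of_nonneg (by linarith : (0:ℝ) ≤ σ - 1/2),
    abs_of_pos (by norm_num : (0:ℝ) < (1:ℝ)/2), abs_of_pos hc] at htri
  have hw : σ * euclNorm w ≤ σ * (euclNorm u + τ * euclNorm φ) := by
    have h2 : ((1:ℝ)/2) * euclNorm (S₁ *ᵥ (S₂ *ᵥ u)) ≤ ((1:ℝ)/2) * euclNorm u := by linarith
    have h3 : c * euclNorm (X₁ *ᵥ φ) ≤ c * euclNorm φ := by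
      exact mul_le_mul_of_nonneg_left hcontr3 hc.le
    rw [hcdef] at h3 htri
    nlinarith [euclNorm_nonneg u, euclNorm_nonneg φ]
  exact (mul_le_mul_iff_right₀ hσpos).mp hw
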